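/- Let A₀, A₁ be Hermitian d_A×d_A complex matrices with A₀² = A₁² = I, and B₀, B₁ Hermitian d_B×d_B complex matrices with B₀² = B₁² = I. Set A₊ = (A₀+A₁)/√2, A₋ = (A₀−A₁)/√2, and β̂ = A₀⊗B₀ + A₀⊗B₁ + A₁⊗B₀ − A₁⊗B₁. Then 2√2·(I⊗I) − β̂ = (1/√2)·[(A₊⊗I − I⊗B₀)² + (A₋⊗I − I⊗B₁)²]. In particular 2√2·(I⊗I) − β̂ is positive semidefinite. -/

import Mathlib

open Matrix
open scoped Kronecker ComplexOrder

private lemma sub_kron {l m n p : Type*} (A B : Matrix l m ℂ) (C : Matrix n p ℂ) :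
    (A - B) ⊗ₖ C = A ⊗ₖ C - B ⊗ₖ C := by
  ext ⟨i, j⟩ ⟨k, r⟩
  simp [Matrix.kroneckerMap_apply, sub_mul]

private lemma kron_conjT {m n : Type*} (X : Matrix m m ℂ) (Y : Matrix n n ℂ) :
    (X ⊗ₖ Y)ᴴ = Xᴴ ⊗ₖ Yᴴ := by
  ext ⟨i, j⟩ ⟨k, r⟩
  simp [Matrix.conjTranspose_apply, Matrix.kroneckerMap_apply]

private lemma smul_psd {n : Type*} [Fintype n] [DecidableEq n] {M : Matrix n n ℂ} (r : ℝ) (hr : 0 ≤ r)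
    (hM : M.PosSemidef) : ((r : ℂ) • M).PosSemidef := by
  constructor
  · unfold Matrix.IsHermitian
    rw [Matrix.conjTranspose_smul, hM.1.eq]
    simp
  · intro x
    have h1 : (0 : ℂ) ≤ (r : ℂ) := by
      rw [Complex.zero_le_real]; exact hr
    exact (hM.smul h1).2 x

private lemma sq_psd {n : Type*} [Fintype n] [DecidableEq n] {M : Matrix n n ℂ} (hM : M.IsHermitian) :
    (M ^ 2).PosSemidef := by
  have h := Matrix.posSemidef_conjTranspose_mul_self M
  rw [hM.eq] at h
  rw [pow_two]
  exact h

/-- sum-of-squares decomposition of the shifted CHSH operator. -/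
theorem chsh_sos_decomposition (dA dB : ℕ)
    (A₀ A₁ : Matrix (Fin dA) (Fin dA) ℂ)
    (B₀ B₁ : Matrix (Fin dB) (Fin dB) ℂ)
    (hA₀ : A₀.IsHermitian) (hA₁ : A₁.IsHermitian)
    (hA₀2 : A₀ * A₀ = 1) (hA₁2 : A₁ * A₁ = 1)
    (hB₀ : B₀.IsHermitian) (hB₁ : B₁.IsHermitian)
    (hB₀2 : B₀ * B₀ = 1) (hB₁2 : B₁ * B₁ = 1) :
    let Ap : Matrix (Fin dA) (Fin dA) ℂ := ((Real.sqrt 2 : ℂ))⁻¹ • (A₀ + A₁)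
    let Am : Matrix (Fin dA) (Fin dA) ℂ := ((Real.sqrt 2 : ℂ))⁻¹ • (A₀ - A₁)
    let β : Matrix (Fin dA × Fin dB) (Fin dA × Fin dB) ℂ :=
      A₀ ⊗ₖ B₀ + A₀ ⊗ₖ B₁ + A₁ ⊗ₖ B₀ - A₁ ⊗ₖ B₁
    (((2 * Real.sqrt 2 : ℝ) : ℂ) • (1 : Matrix (Fin dA × Fin dB) (Fin dA × Fin dB) ℂ) - β
        = ((Real.sqrt 2 : ℂ))⁻¹ •
          ((Ap ⊗ₖ (1 : Matrix (Fin dB) (Fin dB) ℂ)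
              - (1 : Matrix (Fin dA) (Fin dA) ℂ) ⊗ₖ B₀) ^ 2
            + (Am ⊗ₖ (1 : Matrix (Fin dB) (Fin dB) ℂ)
              - (1 : Matrix (Fin dA) (Fin dA) ℂ) ⊗ₖ B₁) ^ 2))
      ∧ (((2 * Real.sqrt 2 : ℝ) : ℂ) • (1 : Matrix (Fin dA × Fin dB) (Fin dA × Fin dB) ℂ)
          - β).PosSemidef := by
  intro Ap Am β
  have hs : (Real.sqrt 2 : ℂ) * (Real.sqrt 2 : ℂ) = 2 := by
    rw [← Complex.ofReal_mul, Real.mul_self_sqrt (by norm_num)]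
    norm_num
  have hs0 : (Real.sqrt 2 : ℂ) ≠ 0 := by
    intro h
    rw [h, mul_zero] at hs
    norm_num at hs
  have heq : ((2 * Real.sqrt 2 : ℝ) : ℂ) • (1 : Matrix (Fin dA × Fin dB) (Fin dA × Fin dB) ℂ) - β
      = ((Real.sqrt 2 : ℂ))⁻¹ •
          ((Ap ⊗ₖ (1 : Matrix (Fin dB) (Fin dB) ℂ)
              - (1 : Matrix (Fin dA) (Fin dA) ℂ) ⊗ₖ B₀) ^ 2
            + (Am ⊗ₖ (1 : Matrix (Fin dB) (Fin dB) ℂ)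
              - (1 : Matrix (Fin dA) (Fin dA) ℂ) ⊗ₖ B₁) ^ 2) := by
    show _ = _
    simp only [Ap, Am, β, pow_two, Matrix.smul_kronecker, Matrix.add_kronecker, sub_kron,
      smul_mul_assoc, mul_smul_comm, sub_mul, mul_sub, add_mul, mul_add,
      ← Matrix.mul_kronecker_mul, Matrix.one_mul, Matrix.mul_one,
      hA₀2, hA₁2, hB₀2, hB₁2, Matrix.one_kronecker_one, smul_sub, smul_add,
      Complex.ofReal_mul]
    have h2 : ((Real.sqrt 2 : ℝ) : ℂ) ^ 2 = 2 := by rw [pow_two, hs]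
    have h3 : ((Real.sqrt 2 : ℝ) : ℂ) ^ 3 = 2 * ((Real.sqrt 2 : ℝ) : ℂ) := by
      rw [pow_succ, h2]
    have h5 : ((Real.sqrt 2 : ℝ) : ℂ) ^ 5 = 4 * ((Real.sqrt 2 : ℝ) : ℂ) := by
      rw [show (5 : ℕ) = 3 + 2 by rfl, pow_add, h3, h2]; ring
    match_scalars <;> field_simp <;>
      first
        | linear_combination hs
        | linear_combination -hs
        | linear_combination (2 * ((Real.sqrt 2 : ℝ) : ℂ) ^ 3
            + 2 * ((Real.sqrt 2 : ℝ) : ℂ)) * hs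
        | linear_combination (2 * ((Real.sqrt 2 : ℝ) : ℂ) ^ 2 + 2) * hs
        | linear_combination 0 * hs
  refine ⟨heq, ?_⟩
  rw [heq]
  have hAp : Ap.IsHermitian := by
    show Matrix.IsHermitian _
    unfold Matrix.IsHermitian
    rw [Matrix.conjTranspose_smul, Matrix.conjTranspose_add, hA₀.eq, hA₁.eq]
    congr 1
    simp [← Complex.ofReal_inv]
  have hAm : Am.IsHermitian := by
    show Matrix.IsHermitian _
    unfold Matrix.IsHermitian
    rw [Matrix.conjTranspose_smul, Matrix.conjTranspose_sub, hA₀.eq, hA₁.eq]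
    congr 1
    simp [← Complex.ofReal_inv]
  have h1 : (Ap ⊗ₖ (1 : Matrix (Fin dB) (Fin dB) ℂ)
      - (1 : Matrix (Fin dA) (Fin dA) ℂ) ⊗ₖ B₀).IsHermitian := by
    unfold Matrix.IsHermitian
    rw [Matrix.conjTranspose_sub, kron_conjT, kron_conjT, hAp.eq, hB₀.eq,
      Matrix.conjTranspose_one, Matrix.conjTranspose_one]
  have h2 : (Am ⊗ₖ (1 : Matrix (Fin dB) (Fin dB) ℂ)
      - (1 : Matrix (Fin dA) (Fin dA) ℂ) ⊗ₖ B₁).IsHermitian := by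
    unfold Matrix.IsHermitian
    rw [Matrix.conjTranspose_sub, kron_conjT, kron_conjT, hAm.eq, hB₁.eq,
      Matrix.conjTranspose_one, Matrix.conjTranspose_one]
  have : ((Real.sqrt 2 : ℂ))⁻¹ = (((Real.sqrt 2)⁻¹ : ℝ) : ℂ) := by
    simp
  rw [this]
  exact smul_psd _ (by positivity) ((sq_psd h1).add (sq_psd h2))
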